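/- The function f(x) := ((sin x)/x − (2 + cos x)/3)/(x − sin x), equivalently f(x) = (3·sin x − x·cos x − 2x)/(3x² − 3x·sin x), is strictly decreasing on the open interval (0, π/2). -/

import Mathlib

open Real Set

/-- Monotone l'Hôpital rule (strict anti version) on `Ioo 0 b`. -/
lemma ratio_strictAntiOn (f g f' g' : ℝ → ℝ) {b : ℝ}
    (hf : ∀ x, HasDerivAt f (f' x) x)
    (hg : ∀ x, HasDerivAt g (g' x) x)
    (hf0 : f 0 = 0) (hg0 : g 0 = 0)
    (hg' : ∀ x ∈ Ioo 0 b, 0 < g' x)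
    (hanti : StrictAntiOn (fun x => f' x / g' x) (Ioo 0 b)) :
    StrictAntiOn (fun x => f x / g x) (Ioo 0 b) := by
  have hfc : Continuous f := by
    rw [continuous_iff_continuousAt]; exact fun x => (hf x).continuousAt
  have hgc : Continuous g := by
    rw [continuous_iff_continuousAt]; exact fun x => (hg x).continuousAt
  -- g is positive on (0, b)
  have gpos : ∀ z ∈ Ioo 0 b, 0 < g z := by
    intro z hz
    obtain ⟨c, hc, hceq⟩ := exists_hasDerivAt_eq_slope g g' hz.1 hgc.continuousOn
      (fun x _ => hg x)
    have hc' : 0 < g' c := hg' c ⟨hc.1, lt_trans hc.2 hz.2⟩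
    rw [hg0, sub_zero, sub_zero] at hceq
    have hgz : 0 < g z / z := hceq ▸ hc'
    have hz0 : 0 < z := hz.1
    by_contra h
    push_neg at h
    have : g z / z ≤ 0 := div_nonpos_of_nonpos_of_nonneg h hz0.le
    linarith
  -- ratio equals derivative ratio at some interior point
  have ratio_eq : ∀ z ∈ Ioo 0 b, ∃ c ∈ Ioo 0 z, f z / g z = f' c / g' c := by
    intro z hz
    obtain ⟨c, hc, hceq⟩ := exists_ratio_hasDerivAt_eq_ratio_slope f f' hz.1
      hfc.continuousOn (fun x _ => hf x) g g' hgc.continuousOn (fun x _ => hg x)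
    refine ⟨c, hc, ?_⟩
    have hcb : c ∈ Ioo 0 b := ⟨hc.1, lt_trans hc.2 hz.2⟩
    rw [hf0, hg0, sub_zero, sub_zero] at hceq
    rw [div_eq_div_iff (gpos z hz).ne' (hg' c hcb).ne']
    linarith [hceq]
  intro x hx y hy hxy
  simp only
  obtain ⟨c, hc, hceq⟩ := ratio_eq x hx
  -- Cauchy MVT on [x, y]
  obtain ⟨d, hd, hdeq⟩ := exists_ratio_hasDerivAt_eq_ratio_slope f f' hxy
    hfc.continuousOn (fun z _ => hf z) g g' hgc.continuousOn (fun z _ => hg z)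
  have hdb : d ∈ Ioo 0 b := ⟨lt_trans hx.1 hd.1, lt_trans hd.2 hy.2⟩
  have hcb : c ∈ Ioo 0 b := ⟨hc.1, lt_trans hc.2 hx.2⟩
  -- g y - g x > 0
  obtain ⟨e, he, heeq⟩ := exists_hasDerivAt_eq_slope g g' hxy hgc.continuousOn
    (fun z _ => hg z)
  have heb : e ∈ Ioo 0 b := ⟨lt_trans hx.1 he.1, lt_trans he.2 hy.2⟩
  have hΔg : 0 < g y - g x := by
    have := hg' e heb
    rw [heeq] at this
    have hyx : 0 < y - x := by linarith
    have := (div_pos_iff.mp this)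
    rcases this with ⟨h1, _⟩ | ⟨_, h2⟩
    · exact h1
    · linarith
  -- key strict inequality on derivative ratios
  have key : f' d / g' d < f' c / g' c := hanti hcb hdb (lt_trans hc.2 hd.1)
  rw [← hceq] at key
  -- convert Cauchy identity to ratio
  have hΔ : (f y - f x) / (g y - g x) = f' d / g' d := by
    rw [div_eq_div_iff hΔg.ne' (hg' d hdb).ne']
    linarith [hdeq]
  rw [← hΔ] at key
  have hgx : 0 < g x := gpos x hx
  have hgy : 0 < g y := gpos y hy
  rw [div_lt_div_iff₀ hΔg hgx] at key
  rw [div_lt_div_iff₀ hgy hgx]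
  nlinarith [key]

lemma deriv1 (x : ℝ) :
    HasDerivAt (fun x : ℝ => 3 * sin x - x * cos x - 2 * x)
      (2 * cos x + x * sin x - 2) x := by
  have h1 := (Real.hasDerivAt_sin x).const_mul (3 : ℝ)
  have h2 := (hasDerivAt_id x).mul (Real.hasDerivAt_cos x)
  have h3 := (hasDerivAt_id x).const_mul (2 : ℝ)
  refine HasDerivAt.congr_deriv ((h1.sub h2).sub h3) ?_
  simp [id_eq]; try ring

lemma deriv1' (x : ℝ) :
    HasDerivAt (fun x : ℝ => 3 * x ^ 2 - 3 * x * sin x)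
      (6 * x - 3 * sin x - 3 * x * cos x) x := by
  have h1 := (hasDerivAt_pow 2 x).const_mul (3 : ℝ)
  have h2 := (((hasDerivAt_id x).const_mul (3 : ℝ)).mul (Real.hasDerivAt_sin x))
  refine HasDerivAt.congr_deriv (h1.sub h2) ?_
  simp [id_eq]; try ring

lemma deriv2 (x : ℝ) :
    HasDerivAt (fun x : ℝ => 2 * cos x + x * sin x - 2)
      (x * cos x - sin x) x := by
  have h1 := (Real.hasDerivAt_cos x).const_mul (2 : ℝ)
  have h2 := (hasDerivAt_id x).mul (Real.hasDerivAt_sin x)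
  have h3 := hasDerivAt_const x (2 : ℝ)
  refine HasDerivAt.congr_deriv ((h1.add h2).sub h3) ?_
  simp [id_eq]; try ring

lemma deriv2' (x : ℝ) :
    HasDerivAt (fun x : ℝ => 6 * x - 3 * sin x - 3 * x * cos x)
      (6 - 6 * cos x + 3 * x * sin x) x := by
  have h1 := (hasDerivAt_id x).const_mul (6 : ℝ)
  have h2 := (Real.hasDerivAt_sin x).const_mul (3 : ℝ)
  have h3 := (((hasDerivAt_id x).const_mul (3 : ℝ)).mul (Real.hasDerivAt_cos x))
  refine HasDerivAt.congr_deriv ((h1.sub h2).sub h3) ?_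
  simp [id_eq]; try ring

lemma deriv3 (x : ℝ) :
    HasDerivAt (fun x : ℝ => x * cos x - sin x) (-(x * sin x)) x := by
  have h1 := (hasDerivAt_id x).mul (Real.hasDerivAt_cos x)
  have h2 := Real.hasDerivAt_sin x
  refine HasDerivAt.congr_deriv (h1.sub h2) ?_
  simp [id_eq]; try ring

lemma deriv3' (x : ℝ) :
    HasDerivAt (fun x : ℝ => 6 - 6 * cos x + 3 * x * sin x)
      (9 * sin x + 3 * x * cos x) x := by
  have h1 := (Real.hasDerivAt_cos x).const_mul (6 : ℝ)
  have h2 := (((hasDerivAt_id x).const_mul (3 : ℝ)).mul (Real.hasDerivAt_sin x))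
  refine HasDerivAt.congr_deriv (((hasDerivAt_const x (6 : ℝ)).sub h1).add h2) ?_
  simp [id_eq]; try ring

lemma anti3 : StrictAntiOn (fun x : ℝ => -(x * sin x) / (9 * sin x + 3 * x * cos x))
    (Ioo 0 (π / 2)) := by
  intro x hx y hy hxy
  obtain ⟨hx0, hxb⟩ := hx
  obtain ⟨hy0, hyb⟩ := hy
  have hpi : (0 : ℝ) < π := Real.pi_pos
  have hsx : 0 < sin x := Real.sin_pos_of_pos_of_lt_pi hx0 (by linarith)
  have hsy : 0 < sin y := Real.sin_pos_of_pos_of_lt_pi hy0 (by linarith)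
  have hcx : 0 < cos x := Real.cos_pos_of_mem_Ioo ⟨by linarith, hxb⟩
  have hcy : 0 < cos y := Real.cos_pos_of_mem_Ioo ⟨by linarith, hyb⟩
  have hDx : 0 < 9 * sin x + 3 * x * cos x := by positivity
  have hDy : 0 < 9 * sin y + 3 * y * cos y := by positivity
  simp only
  rw [div_lt_div_iff₀ hDy hDx]
  have hs : 0 < sin (y - x) := Real.sin_pos_of_pos_of_lt_pi (by linarith) (by linarith)
  rw [Real.sin_sub] at hs
  have h1 : 0 < 9 * sin x * sin y * (y - x) := by
    have : 0 < y - x := by linarith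
    positivity
  nlinarith [mul_pos (mul_pos hx0 hy0) hs, h1]

lemma D3_pos : ∀ x ∈ Ioo 0 (π / 2), 0 < 9 * sin x + 3 * x * cos x := by
  intro x hx
  have hpi : (0 : ℝ) < π := Real.pi_pos
  have hsx : 0 < sin x := Real.sin_pos_of_pos_of_lt_pi hx.1 (by linarith [hx.2])
  have hcx : 0 < cos x := Real.cos_pos_of_mem_Ioo ⟨by linarith [hx.1], hx.2⟩
  have := hx.1
  positivity

lemma anti2 : StrictAntiOn
    (fun x : ℝ => (x * cos x - sin x) / (6 - 6 * cos x + 3 * x * sin x))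
    (Ioo 0 (π / 2)) := by
  apply ratio_strictAntiOn _ _ _ _ deriv3 deriv3' (by simp) (by simp) D3_pos anti3

lemma D2_pos : ∀ x ∈ Ioo 0 (π / 2), 0 < 6 - 6 * cos x + 3 * x * sin x := by
  intro x hx
  have hpi : (0 : ℝ) < π := Real.pi_pos
  have hsx : 0 < sin x := Real.sin_pos_of_pos_of_lt_pi hx.1 (by linarith [hx.2])
  nlinarith [Real.cos_le_one x, mul_pos hx.1 hsx]

lemma anti1 : StrictAntiOn
    (fun x : ℝ => (2 * cos x + x * sin x - 2) / (6 * x - 3 * sin x - 3 * x * cos x))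
    (Ioo 0 (π / 2)) := by
  apply ratio_strictAntiOn _ _ _ _ deriv2 deriv2' (by simp) (by simp) D2_pos anti2

lemma D1_pos : ∀ x ∈ Ioo 0 (π / 2), 0 < 6 * x - 3 * sin x - 3 * x * cos x := by
  intro x hx
  have h1 : sin x < x := Real.sin_lt hx.1
  have h2 : cos x ≤ 1 := Real.cos_le_one x
  nlinarith [hx.1]

lemma anti0 : StrictAntiOn
    (fun x : ℝ => (3 * sin x - x * cos x - 2 * x) / (3 * x ^ 2 - 3 * x * sin x))
    (Ioo 0 (π / 2)) := by
  apply ratio_strictAntiOn _ _ _ _ deriv1 deriv1' (by simp) (by simp) D1_pos anti1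

theorem f_strictAntiOn :
    StrictAntiOn (fun x : ℝ => (sin x / x - (2 + cos x) / 3) / (x - sin x)) (Ioo 0 (π / 2)) := by
  have hEq : ∀ x ∈ Ioo 0 (π / 2),
      (sin x / x - (2 + cos x) / 3) / (x - sin x)
        = (3 * sin x - x * cos x - 2 * x) / (3 * x ^ 2 - 3 * x * sin x) := by
    intro x hx
    have hx0 : (0 : ℝ) < x := hx.1
    have hs : sin x < x := Real.sin_lt hx0
    have h1 : x - sin x ≠ 0 := by linarith
    have h2 : 3 * x ^ 2 - 3 * x * sin x ≠ 0 := by nlinarith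
    rw [div_eq_div_iff h1 h2]
    field_simp
    ring
  intro x hx y hy hxy
  have := anti0 hx hy hxy
  simp only at this ⊢
  rw [hEq x hx, hEq y hy]
  exact this
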